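/- Let N, n be positive natural numbers, λ > 0, g ≥ 0, and κ > g / (2 * λ). Let A, W, P : Matrix (Fin n) (Fin n) ℝ with P invertible and symmetric, W positive semidefinite, G_i : Fin N → Matrix (Fin n) (Fin n) ℝ with each G_i i symmetric positive semidefinite, G = ∑ i, G_i i satisfying ∀ v : Fin n → ℝ, v ⬝ᵥ (G *ᵥ v) ≤ g * (v ⬝ᵥ v), and Q : Matrix (Fin N) (Fin N) ℝ such that for every v : Fin N → ℝ with ∑ i, v i = 0 one has λ * (v ⬝ᵥ v) ≤ v ⬝ᵥ (Q *ᵥ v). Define M = (1 : Matrix (Fin N) (Fin N) ℝ) ⊗ₖ (G - P⁻¹ * W * P⁻¹) - (2 * N : ℝ) • blockDiag (fun i => G_i i) - (2 * κ) • (Q ⊗ₖ (1 : Matrix (Fin n) (Fin n) ℝ)). Then for every nonzero x : Fin N × Fin n → ℝ with ∀ k, ∑ i, x (i,k) = 0, one has x ⬝ᵥ (M *ᵥ x) < 0. -/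

import Mathlib

open Matrix Kronecker BigOperators

/-- Block-diagonal matrix indexed by `Fin N × Fin n` with diagonal blocks `G i`. -/
def blockDiag {N n : ℕ} (G : Fin N → Matrix (Fin n) (Fin n) ℝ) :
    Matrix (Fin N × Fin n) (Fin N × Fin n) ℝ :=
  Matrix.of fun p q => if p.1 = q.1 then G p.1 p.2 q.2 else 0

lemma kron1L {N n : ℕ} (B : Matrix (Fin n) (Fin n) ℝ) (x : Fin N × Fin n → ℝ) :
    x ⬝ᵥ (((1 : Matrix (Fin N) (Fin N) ℝ) ⊗ₖ B) *ᵥ x)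
      = ∑ i, (fun k => x (i,k)) ⬝ᵥ (B *ᵥ fun k => x (i,k)) := by
  simp [dotProduct, mulVec, Fintype.sum_prod_type, Matrix.one_apply, ite_mul,
    mul_ite, mul_zero, zero_mul, Finset.mul_sum, Finset.sum_ite_eq, Finset.sum_ite_eq']

lemma kron1R {N n : ℕ} (Q : Matrix (Fin N) (Fin N) ℝ) (x : Fin N × Fin n → ℝ) :
    x ⬝ᵥ ((Q ⊗ₖ (1 : Matrix (Fin n) (Fin n) ℝ)) *ᵥ x)
      = ∑ k, (fun i => x (i,k)) ⬝ᵥ (Q *ᵥ fun i => x (i,k)) := by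
  simp only [dotProduct, mulVec, Fintype.sum_prod_type, kroneckerMap_apply,
    Matrix.one_apply, ite_mul, mul_ite, mul_zero, zero_mul, mul_one, Finset.mul_sum,
    Finset.sum_ite_eq, Finset.sum_ite_eq', Finset.mem_univ, if_true]
  rw [Finset.sum_comm]

lemma blockD {N n : ℕ} (G_i : Fin N → Matrix (Fin n) (Fin n) ℝ) (x : Fin N × Fin n → ℝ) :
    x ⬝ᵥ ((_root_.blockDiag G_i) *ᵥ x)
      = ∑ i, (fun k => x (i,k)) ⬝ᵥ (G_i i *ᵥ fun k => x (i,k)) := by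
  simp [dotProduct, mulVec, Fintype.sum_prod_type, _root_.blockDiag, ite_mul,
    mul_ite, mul_zero, zero_mul, Finset.mul_sum, Finset.sum_ite_eq, Finset.sum_ite_eq']

theorem stmt15 {N n : ℕ} (hN : 0 < N) (hn : 0 < n)
    (lam : ℝ) (hlam : 0 < lam) (g : ℝ) (hg0 : 0 ≤ g)
    (κ : ℝ) (hκ : g / (2 * lam) < κ)
    (A W P : Matrix (Fin n) (Fin n) ℝ) (hP : IsUnit P) (hPsym : Pᵀ = P)
    (hW : W.PosSemidef)
    (G_i : Fin N → Matrix (Fin n) (Fin n) ℝ)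
    (hGisym : ∀ i, (G_i i)ᵀ = G_i i) (hGipsd : ∀ i, (G_i i).PosSemidef)
    (G : Matrix (Fin n) (Fin n) ℝ) (hG : G = ∑ i, G_i i)
    (hgG : ∀ v : Fin n → ℝ, v ⬝ᵥ (G *ᵥ v) ≤ g * (v ⬝ᵥ v))
    (Q : Matrix (Fin N) (Fin N) ℝ)
    (hQ : ∀ v : Fin N → ℝ, (∑ i, v i) = 0 → lam * (v ⬝ᵥ v) ≤ v ⬝ᵥ (Q *ᵥ v))
    (M : Matrix (Fin N × Fin n) (Fin N × Fin n) ℝ)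
    (hM : M = (1 : Matrix (Fin N) (Fin N) ℝ) ⊗ₖ (G - P⁻¹ * W * P⁻¹)
        - (2 * N : ℝ) • blockDiag (fun i => G_i i)
        - (2 * κ) • (Q ⊗ₖ (1 : Matrix (Fin n) (Fin n) ℝ))) :
    ∀ x : Fin N × Fin n → ℝ, x ≠ 0 → (∀ k, (∑ i, x (i, k)) = 0) →
      x ⬝ᵥ (M *ᵥ x) < 0 := by
  intro x hx hsum
  -- PSD of P⁻¹ W P⁻¹
  have hPinv : (P⁻¹)ᴴ = P⁻¹ := by
    rw [conjTranspose_eq_transpose_of_trivial, Matrix.transpose_nonsing_inv, hPsym]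
  have hWpsd : (P⁻¹ * W * P⁻¹).PosSemidef := by
    have := hW.mul_mul_conjTranspose_same P⁻¹
    rwa [hPinv] at this
  -- abbreviations
  set S : ℝ := x ⬝ᵥ x with hS
  have hSrow : S = ∑ i, (fun k => x (i,k)) ⬝ᵥ (fun k => x (i,k)) := by
    simp [hS, dotProduct, Fintype.sum_prod_type]
  have hScol : S = ∑ k, (fun i => x (i,k)) ⬝ᵥ (fun i => x (i,k)) := by
    simp only [hS, dotProduct, Fintype.sum_prod_type]
    rw [Finset.sum_comm]
  have hSnn : 0 ≤ S := Finset.sum_nonneg fun p _ => mul_self_nonneg _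
  have hSne : S ≠ 0 := fun h => hx (dotProduct_self_eq_zero.mp h)
  have hSpos : 0 < S := lt_of_le_of_ne hSnn (Ne.symm hSne)
  -- expand quadratic form
  rw [hM, Matrix.sub_mulVec, Matrix.sub_mulVec, dotProduct_sub, dotProduct_sub,
    Matrix.smul_mulVec, Matrix.smul_mulVec, dotProduct_smul, dotProduct_smul,
    kron1L, kron1R, blockD]
  have h1 : ∑ i, (fun k => x (i,k)) ⬝ᵥ ((G - P⁻¹ * W * P⁻¹) *ᵥ fun k => x (i,k)) ≤ g * S := by
    rw [hSrow, Finset.mul_sum]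
    refine Finset.sum_le_sum fun i _ => ?_
    rw [Matrix.sub_mulVec, dotProduct_sub]
    have h2 := hWpsd.dotProduct_mulVec_nonneg (fun k => x (i,k))
    simp only [star_trivial] at h2
    have := hgG (fun k => x (i,k))
    linarith
  have h2 : 0 ≤ ∑ i, (fun k => x (i,k)) ⬝ᵥ ((fun i => G_i i) i *ᵥ fun k => x (i,k)) := by
    refine Finset.sum_nonneg fun i _ => ?_
    have := (hGipsd i).dotProduct_mulVec_nonneg (fun k => x (i,k))
    simpa using this
  have h3 : lam * S ≤ ∑ k, (fun i => x (i,k)) ⬝ᵥ (Q *ᵥ fun i => x (i,k)) := by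
    rw [hScol, Finset.mul_sum]
    exact Finset.sum_le_sum fun k _ => hQ _ (hsum k)
  have hNnn : (0:ℝ) ≤ 2 * N := by positivity
  have hκpos : 0 < κ := lt_of_le_of_lt (div_nonneg hg0 (by linarith)) hκ
  have hκ' : g < 2 * κ * lam := by
    rw [div_lt_iff₀ (by linarith)] at hκ; nlinarith
  simp only [smul_eq_mul]
  beta_reduce at h2
  nlinarith [mul_le_mul_of_nonneg_left h3 (by linarith : (0:ℝ) ≤ 2 * κ),
    mul_nonneg hNnn h2]
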